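/- Let (𝒮, μ) be a defining pair in Q, A = KQ/I the algebra defined by it, and f : KQ → K the linear map with f(p) = 1 if p = C^{μ(C)} for some C ∈ 𝒮 and f(p) = 0 for all other paths p. Then f(xy) = f(yx) for all x, y ∈ KQ. -/

import Mathlib

/-!  A model of the path algebra `KQ` of a finite quiver `Q` (vertex set `V`,
arrow set `A`, source and target maps `s t : A → V`), as the quotient of the
free algebra on `V ⊕ A` by the usual path-algebra relations.  -/

open FreeAlgebra

inductive PathRel (K V A : Type) [Field K] [Fintype V] [DecidableEq V] (s t : A → V) :
    FreeAlgebra K (V ⊕ A) → FreeAlgebra K (V ⊕ A) → Prop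
  | vtxMul : ∀ v w : V,
      PathRel K V A s t (ι K (Sum.inl v) * ι K (Sum.inl w))
        (if v = w then ι K (Sum.inl v) else 0)
  | unit : PathRel K V A s t (∑ v : V, ι K (Sum.inl v)) 1
  | src : ∀ a : A,
      PathRel K V A s t (ι K (Sum.inl (s a)) * ι K (Sum.inr a)) (ι K (Sum.inr a))
  | tgt : ∀ a : A,
      PathRel K V A s t (ι K (Sum.inr a) * ι K (Sum.inl (t a))) (ι K (Sum.inr a))

/-- The path algebra `KQ`. -/
abbrev PathAlg (K V A : Type) [Field K] [Fintype V] [DecidableEq V] (s t : A → V) : Type :=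
  RingQuot (PathRel K V A s t)

section

variable (K V A : Type) [Field K] [Fintype V] [DecidableEq V] (s t : A → V)

/-- The element of `KQ` corresponding to an arrow. -/
noncomputable def arrow (a : A) : PathAlg K V A s t :=
  RingQuot.mkAlgHom K (PathRel K V A s t) (ι K (Sum.inr a))

/-- The idempotent of `KQ` corresponding to a vertex (trivial path). -/
noncomputable def vtx (v : V) : PathAlg K V A s t :=
  RingQuot.mkAlgHom K (PathRel K V A s t) (ι K (Sum.inl v))

/-- The element of `KQ` given by a path, recorded as its list of arrows. -/
noncomputable def pathElem (l : List A) : PathAlg K V A s t :=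
  (l.map (arrow K V A s t)).prod

/-- The ideal `J²`, where `J` is the arrow ideal: it is generated by the
products of two arrows (equivalently, by the paths of length 2). -/
def JSqIdeal : TwoSidedIdeal (PathAlg K V A s t) :=
  TwoSidedIdeal.span {x | ∃ a b : A, x = arrow K V A s t a * arrow K V A s t b}

/-- An ideal `I` of `KQ` is admissible if `J^N ⊆ I ⊆ J²` for some `N ≥ 2`;
`J^N ⊆ I` amounts to all paths of length `N` lying in `I`. -/
def Admissible (I : TwoSidedIdeal (PathAlg K V A s t)) : Prop :=
  ∃ N : ℕ, 2 ≤ N ∧ (∀ l : List A, l.length = N → pathElem K V A s t l ∈ I) ∧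
    I ≤ JSqIdeal K V A s t

/-- Condition (M): for every arrow `a` there is at most one arrow `b` with
`ab ∉ I` and at most one arrow `c` with `ca ∉ I`. -/
def ConditionM (I : TwoSidedIdeal (PathAlg K V A s t)) : Prop :=
  ∀ a : A,
    (∀ b b' : A, arrow K V A s t a * arrow K V A s t b ∉ I →
      arrow K V A s t a * arrow K V A s t b' ∉ I → b = b') ∧
    (∀ c c' : A, arrow K V A s t c * arrow K V A s t a ∉ I →
      arrow K V A s t c' * arrow K V A s t a ∉ I → c = c')

/-- `σ : Q₁ → Q₁ ∪ {⋄}` (with `⋄ = none`): `σ a = some b` iff `ab ∉ I`. -/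
def SigmaSpec (I : TwoSidedIdeal (PathAlg K V A s t)) (σ : A → Option A) : Prop :=
  ∀ a b : A, σ a = some b ↔ arrow K V A s t a * arrow K V A s t b ∉ I

/-- `τ : Q₁ → Q₁ ∪ {⋄}` (with `⋄ = none`): `τ a = some c` iff `ca ∉ I`. -/
def TauSpec (I : TwoSidedIdeal (PathAlg K V A s t)) (τ : A → Option A) : Prop :=
  ∀ a c : A, τ a = some c ↔ arrow K V A s t c * arrow K V A s t a ∉ I

end

/-- Iterate of `σ` (extended to `Q₁ ∪ {⋄}` by `σ(⋄) = ⋄`) applied to an arrow: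
`OIter σ n a = σⁿ(a)`. -/
def OIter {A : Type} (σ : A → Option A) (n : ℕ) (a : A) : Option A :=
  (fun o => o.bind σ)^[n] (some a)

/-- A `(σ,τ)`-maximal path `a₁ ⋯ a_r`: `σ(aᵢ) = a_{i+1}`, `σ(a_r) = ⋄`,
`τ(a₁) = ⋄`. -/
def IsMaximalPath {A : Type} (σ τ : A → Option A) (l : List A) : Prop :=
  l ≠ [] ∧ l.Chain' (fun x y => σ x = some y) ∧
    (∀ x ∈ l.getLast?, σ x = none) ∧ (∀ x ∈ l.head?, τ x = none)

/-- The cycle `C_a = a σ(a) ⋯ σ^{m̂_a−1}(a)`, where `m̂_a` is the least positive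
integer with `σ^{m̂_a}(a) = a`:  `l` has entries the iterates of `σ` at `a` and
length the least positive return time of `a` under `σ`. -/
def IsSigmaCycleOf {A : Type} (σ : A → Option A) (a : A) (l : List A) : Prop :=
  l ≠ [] ∧ (∀ i : ℕ, i < l.length → l[i]? = OIter σ i a) ∧
    OIter σ l.length a = some a ∧
    ∀ k : ℕ, 0 < k → k < l.length → OIter σ k a ≠ some a

/-- A list of arrows is composable (i.e. a genuine path) if the target of each
arrow is the source of the next. -/
def Composable {V A : Type} (s t : A → V) (l : List A) : Prop :=
  l.Chain' (fun a b => t a = s b)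

/-- A simple cycle: a nonempty path with the same start and end vertex and no
repeated arrows. -/
def IsSimpleCycle {V A : Type} (s t : A → V) (l : List A) : Prop :=
  l ≠ [] ∧ Composable s t l ∧ (∀ x ∈ l.head?, ∀ y ∈ l.getLast?, t y = s x) ∧ l.Nodup

/-- The path `C^m` for a cycle `C`. -/
def cyclePow {A : Type} (l : List A) (m : ℕ) : List A := (List.replicate m l).flatten

/-- A defining pair `(𝒮, μ)` in the quiver `Q`: a set `𝒮` of simple cycles and
`μ : 𝒮 → ℤ_{>0}` satisfying (D0)–(D4). -/
def IsDefiningPair {V A : Type} (s t : A → V) (S : Set (List A)) (μ : List A → ℕ) : Prop :=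
  (∀ l ∈ S, IsSimpleCycle s t l) ∧
  (∀ l ∈ S, 0 < μ l) ∧
  (∀ l ∈ S, l.length = 1 → 1 < μ l) ∧
  (∀ l ∈ S, ∀ l' : List A, l.IsRotated l' → l' ∈ S) ∧
  (∀ l ∈ S, ∀ l' ∈ S, l.IsRotated l' → μ l = μ l') ∧
  (∀ a : A, ∃ l ∈ S, a ∈ l) ∧
  (∀ l ∈ S, ∀ l' ∈ S, (∃ a : A, a ∈ l ∧ a ∈ l') → l.IsRotated l')

/-- The set of relations of Types 1, 2 and 3 attached to a defining pair:
Type 1: `C^{μ(C)} − C'^{μ(C')}` for `C, C' ∈ 𝒮` cycles at the same vertex;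
Type 2: `C^{μ(C)} a` for `C ∈ 𝒮` with first arrow `a`;
Type 3: `ab` for arrows `a, b` with `ab` not a subpath of any `C^s`, `C ∈ 𝒮`. -/
def RelSet (K V A : Type) [Field K] [Fintype V] [DecidableEq V] (s t : A → V)
    (S : Set (List A)) (μ : List A → ℕ) : Set (PathAlg K V A s t) :=
  {x | ∃ l ∈ S, ∃ l' ∈ S, ∃ a ∈ l.head?, ∃ a' ∈ l'.head?, s a = s a' ∧
      x = pathElem K V A s t (cyclePow l (μ l)) - pathElem K V A s t (cyclePow l' (μ l'))} ∪
  {x | ∃ l ∈ S, ∃ a ∈ l.head?, x = pathElem K V A s t (cyclePow l (μ l) ++ [a])} ∪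
  {x | ∃ a b : A, x = arrow K V A s t a * arrow K V A s t b ∧
      ∀ l ∈ S, ∀ m : ℕ, ¬ [a, b] <:+: cyclePow l m}

/-- The ideal of relations of a defining pair. -/
def DefIdeal (K V A : Type) [Field K] [Fintype V] [DecidableEq V] (s t : A → V)
    (S : Set (List A)) (μ : List A → ℕ) : TwoSidedIdeal (PathAlg K V A s t) :=
  TwoSidedIdeal.span (RelSet K V A s t S μ)

/-- The relation whose `RingQuot` is the algebra `KQ/I` defined by a defining
pair, `I` generated by the Type 1, 2, 3 relations. -/
def QRel (K V A : Type) [Field K] [Fintype V] [DecidableEq V] (s t : A → V)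
    (S : Set (List A)) (μ : List A → ℕ) :
    PathAlg K V A s t → PathAlg K V A s t → Prop :=
  fun x y => x ∈ RelSet K V A s t S μ ∧ y = 0


/-! ### Auxiliary lemmas for Statement 14 -/

section ListAux

variable {A' : Type}

lemma cyclePow_zero (l : List A') : cyclePow l 0 = [] := rfl

lemma cyclePow_succ (l : List A') (m : ℕ) : cyclePow l (m + 1) = l ++ cyclePow l m := by
  simp [cyclePow, List.replicate_succ]

lemma cyclePow_nil (m : ℕ) : cyclePow ([] : List A') m = [] := by
  induction m with
  | zero => rfl
  | succ m ih => rw [cyclePow_succ, ih]; rfl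

lemma cyclePow_succ' (l : List A') (m : ℕ) : cyclePow l (m + 1) = cyclePow l m ++ l := by
  induction m with
  | zero => simp [cyclePow_succ, cyclePow_zero]
  | succ m ih =>
    rw [cyclePow_succ l (m + 1)]
    conv_lhs => rw [ih]
    rw [cyclePow_succ l m]
    simp [List.append_assoc]

lemma cyclePow_sandwich (D T : List A') (k : ℕ) :
    D ++ cyclePow (T ++ D) k ++ T = cyclePow (D ++ T) (k + 1) := by
  induction k with
  | zero => simp [cyclePow_succ, cyclePow_zero]
  | succ k ih =>
    rw [cyclePow_succ (T ++ D) k, cyclePow_succ (D ++ T) (k + 1), ← ih]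
    simp [List.append_assoc]

lemma cyclePow_rotate_one (C : List A') (m : ℕ) :
    (cyclePow C m).rotate 1 = cyclePow (C.rotate 1) m := by
  match C, m with
  | C, 0 => simp [cyclePow_zero]
  | [], m => simp [cyclePow_nil]
  | a :: D, (k+1) =>
    have h1 : cyclePow (a :: D) (k + 1) = a :: (D ++ cyclePow (a :: D) k) := by
      rw [cyclePow_succ]; rfl
    have h2 : (a :: D).rotate 1 = D ++ [a] := by
      simpa using List.rotate_cons_succ D a 0
    rw [h1, h2]
    have h3 : (a :: (D ++ cyclePow (a :: D) k)).rotate 1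
        = (D ++ cyclePow (a :: D) k) ++ [a] := by
      simpa using List.rotate_cons_succ (D ++ cyclePow (a :: D) k) a 0
    rw [h3]
    have : cyclePow (a :: D) k = cyclePow ([a] ++ D) k := rfl
    rw [this]
    exact cyclePow_sandwich D [a] k

lemma cyclePow_rotate (C : List A') (m r : ℕ) :
    (cyclePow C m).rotate r = cyclePow (C.rotate r) m := by
  induction r with
  | zero => simp
  | succ r ih =>
    have h1 : (cyclePow C m).rotate (r + 1) = ((cyclePow C m).rotate r).rotate 1 := by
      rw [List.rotate_rotate]
    have h2 : C.rotate (r + 1) = (C.rotate r).rotate 1 := by rw [List.rotate_rotate]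
    rw [h1, ih, cyclePow_rotate_one, h2]

lemma cyclePow_head {C : List A'} {m : ℕ} {a : A'} (h : (cyclePow C m).head? = some a) :
    C.head? = some a := by
  match C, m with
  | C, 0 => simp [cyclePow_zero] at h
  | [], m => rw [cyclePow_nil] at h; simp at h
  | b :: D, (k+1) =>
    have h1 : cyclePow (b :: D) (k + 1) = b :: (D ++ cyclePow (b :: D) k) := by
      rw [cyclePow_succ]; rfl
    rw [h1] at h
    simpa using h

lemma cyclePow_last {C : List A'} {m : ℕ} {a : A'} (h : (cyclePow C m).getLast? = some a) :
    C.getLast? = some a := by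
  match C, m with
  | C, 0 => simp [cyclePow_zero] at h
  | [], m => rw [cyclePow_nil] at h; simp at h
  | b :: D, (k+1) =>
    rw [cyclePow_succ', List.getLast?_append] at h
    rcases hl : (b :: D).getLast? with _ | c
    · simp at hl
    · rw [hl] at h; simpa using h

lemma rotate_app (l l' : List A') : (l ++ l').rotate l.length = l' ++ l := by
  rw [List.rotate_eq_drop_append_take (by simp), List.take_left, List.drop_left]

end ListAux

section CompAux

variable {V A : Type} {s t : A → V}

lemma cyclePow_composable {C : List A} (h1 : Composable s t C)
    (h2 : ∀ x ∈ C.head?, ∀ y ∈ C.getLast?, t y = s x) (m : ℕ) :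
    Composable s t (cyclePow C m) := by
  induction m with
  | zero => exact List.isChain_nil
  | succ m ih =>
    rw [cyclePow_succ]
    exact List.isChain_append.2 ⟨h1, ih, fun x hx y hy => h2 y (cyclePow_head hy) x hx⟩

end CompAux

section AlgAux

variable {K V A : Type} [Field K] [Fintype V] [DecidableEq V] {s t : A → V}

lemma vtx_mul_vtx (v w : V) :
    vtx K V A s t v * vtx K V A s t w = if v = w then vtx K V A s t v else 0 := by
  unfold vtx
  rw [← map_mul, RingQuot.mkAlgHom_rel K (PathRel.vtxMul v w)]
  split <;> simp

lemma one_eq_sum_vtx : (1 : PathAlg K V A s t) = ∑ v : V, vtx K V A s t v := by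
  have h1 : (RingQuot.mkAlgHom K (PathRel K V A s t)) (∑ v : V, ι K (Sum.inl v))
      = (RingQuot.mkAlgHom K (PathRel K V A s t)) 1 :=
    RingQuot.mkAlgHom_rel K PathRel.unit
  rw [map_one, map_sum] at h1
  rw [← h1]; rfl

lemma svtx_mul_arrow (a : A) :
    vtx K V A s t (s a) * arrow K V A s t a = arrow K V A s t a := by
  unfold vtx arrow
  rw [← map_mul, RingQuot.mkAlgHom_rel K (PathRel.src a)]

lemma arrow_mul_tvtx (a : A) :
    arrow K V A s t a * vtx K V A s t (t a) = arrow K V A s t a := by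
  unfold vtx arrow
  rw [← map_mul, RingQuot.mkAlgHom_rel K (PathRel.tgt a)]

lemma vtx_mul_arrow_ne {v : V} {a : A} (h : v ≠ s a) :
    vtx K V A s t v * arrow K V A s t a = 0 := by
  conv_lhs => rw [← svtx_mul_arrow a]
  rw [← mul_assoc, vtx_mul_vtx, if_neg h, zero_mul]

lemma arrow_mul_vtx_ne {v : V} {a : A} (h : v ≠ t a) :
    arrow K V A s t a * vtx K V A s t v = 0 := by
  conv_lhs => rw [← arrow_mul_tvtx a]
  rw [mul_assoc, vtx_mul_vtx, if_neg (Ne.symm h), mul_zero]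

lemma arrow_mul_arrow_ne {a b : A} (h : t a ≠ s b) :
    arrow K V A s t a * arrow K V A s t b = 0 := by
  conv_lhs => rw [← svtx_mul_arrow b]
  rw [← mul_assoc, arrow_mul_vtx_ne (Ne.symm h), zero_mul]

lemma pathElem_cons (a : A) (l : List A) :
    pathElem K V A s t (a :: l) = arrow K V A s t a * pathElem K V A s t l := by
  simp [pathElem]

lemma pathElem_singleton (a : A) : pathElem K V A s t [a] = arrow K V A s t a := by
  simp [pathElem]

lemma pathElem_append (l l' : List A) :
    pathElem K V A s t (l ++ l') = pathElem K V A s t l * pathElem K V A s t l' := by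
  simp [pathElem]

lemma pathElem_of_not_composable {l : List A} (h : ¬ Composable s t l) :
    pathElem K V A s t l = 0 := by
  induction l with
  | nil => exact absurd List.isChain_nil h
  | cons a l ih =>
    cases l with
    | nil => exact absurd (List.isChain_singleton a) h
    | cons b r =>
      rw [Composable, show List.Chain' _ (a :: b :: r) ↔ _ from List.isChain_cons_cons] at h
      push_neg at h
      by_cases hab : t a = s b
      · rw [pathElem_cons, ih (h hab), mul_zero]
      · rw [pathElem_cons, pathElem_cons, ← mul_assoc, arrow_mul_arrow_ne hab, zero_mul]

lemma vtx_mul_pathElem {v : V} {a : A} {l : List A} (h : l.head? = some a) :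
    vtx K V A s t v * pathElem K V A s t l
      = if v = s a then pathElem K V A s t l else 0 := by
  cases l with
  | nil => simp at h
  | cons b r =>
    simp only [List.head?_cons, Option.some.injEq] at h
    subst h
    rw [pathElem_cons, ← mul_assoc]
    by_cases hv : v = s b
    · rw [if_pos hv, hv, svtx_mul_arrow]
    · rw [if_neg hv, vtx_mul_arrow_ne hv, zero_mul]

lemma pathElem_mul_vtx {v : V} {b : A} {l : List A} (h : l.getLast? = some b) :
    pathElem K V A s t l * vtx K V A s t v
      = if v = t b then pathElem K V A s t l else 0 := by
  induction l with
  | nil => simp at h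
  | cons a r ih =>
    cases r with
    | nil =>
      simp only [List.getLast?_singleton, Option.some.injEq] at h
      subst h
      rw [pathElem_singleton]
      by_cases hv : v = t a
      · rw [if_pos hv, hv, arrow_mul_tvtx]
      · rw [if_neg hv, arrow_mul_vtx_ne hv]
    | cons c r' =>
      have h' : (c :: r').getLast? = some b := by
        rw [List.getLast?_cons_cons] at h; exact h
      rw [pathElem_cons, mul_assoc, ih h']
      split
      · rw [pathElem_cons]
      · rw [mul_zero]

end AlgAux

/-- Let `(𝒮, μ)` be a defining pair and `f : KQ → K` the
linear map with `f(p) = 1` if `p = C^{μ(C)}` for some `C ∈ 𝒮` and `f(p) = 0`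
for all other paths `p`.  Then `f(xy) = f(yx)` for all `x, y ∈ KQ`. -/
theorem trace_form_symmetric
    (K V A : Type) [Field K] [Fintype V] [DecidableEq V] [Fintype A] (s t : A → V)
    (S : Set (List A)) (μ : List A → ℕ) (hS : IsDefiningPair s t S μ)
    (f : PathAlg K V A s t →ₗ[K] K)
    (h1 : ∀ l : List A, Composable s t l → (∃ C ∈ S, l = cyclePow C (μ C)) →
      f (pathElem K V A s t l) = 1)
    (h0 : ∀ l : List A, Composable s t l → l ≠ [] → (¬ ∃ C ∈ S, l = cyclePow C (μ C)) →
      f (pathElem K V A s t l) = 0)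
    (hv : ∀ v : V, f (vtx K V A s t v) = 0) :
    ∀ x y : PathAlg K V A s t, f (x * y) = f (y * x) := by
  classical
  -- spanning set: vertices and nonempty composable paths
  set B : Set (PathAlg K V A s t) :=
    {x | (∃ v, x = vtx K V A s t v) ∨
      ∃ l : List A, l ≠ [] ∧ Composable s t l ∧ x = pathElem K V A s t l} with hBdef
  have hhead : ∀ (l : List A), l ≠ [] → ∃ a, l.head? = some a := by
    intro l h
    cases l with
    | nil => exact absurd rfl h
    | cons a r => exact ⟨a, rfl⟩
  have hlast : ∀ (l : List A), l ≠ [] → ∃ b, l.getLast? = some b := by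
    intro l h
    rw [← Option.isSome_iff_exists]
    exact List.getLast?_isSome.2 h
  -- powers of defining cycles are composable
  have hpowcomp : ∀ C ∈ S, ∀ m : ℕ, Composable s t (cyclePow C m) := by
    intro C hC m
    obtain ⟨_, hcomp, hcyc, _⟩ := hS.1 C hC
    exact cyclePow_composable hcomp hcyc m
  -- rotations of defining powers are defining powers
  have hpowrot : ∀ C ∈ S, ∀ r : ℕ,
      ∃ C' ∈ S, (cyclePow C (μ C)).rotate r = cyclePow C' (μ C') := by
    intro C hC r
    have hmem : C.rotate r ∈ S := hS.2.2.2.1 C hC _ ⟨r, rfl⟩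
    have hmu : μ C = μ (C.rotate r) := hS.2.2.2.2.1 C hC _ hmem ⟨r, rfl⟩
    refine ⟨C.rotate r, hmem, ?_⟩
    rw [cyclePow_rotate, hmu]
  -- key computation: vertex against path
  have hvp : ∀ (v : V) (l : List A), l ≠ [] → Composable s t l →
      f (vtx K V A s t v * pathElem K V A s t l)
        = f (pathElem K V A s t l * vtx K V A s t v) := by
    intro v l hl hcl
    obtain ⟨a, ha⟩ := hhead l hl
    obtain ⟨b, hb⟩ := hlast l hl
    rw [vtx_mul_pathElem ha, pathElem_mul_vtx hb]
    by_cases hpow : ∃ C ∈ S, l = cyclePow C (μ C)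
    · obtain ⟨C, hC, rfl⟩ := hpow
      have hts : t b = s a :=
        (hS.1 C hC).2.2.1 a (cyclePow_head ha) b (cyclePow_last hb)
      rw [hts]
    · have h0l := h0 l hcl hl hpow
      split <;> split <;> simp [h0l]
  -- key computation: path against path
  have hpp : ∀ l l' : List A, l ≠ [] → l' ≠ [] →
      f (pathElem K V A s t l * pathElem K V A s t l')
        = f (pathElem K V A s t l' * pathElem K V A s t l) := by
    intro l l' hl hl'
    rw [← pathElem_append, ← pathElem_append]
    have hne1 : l ++ l' ≠ [] := fun h => hl (List.append_eq_nil_iff.1 h).1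
    have hne2 : l' ++ l ≠ [] := fun h => hl' (List.append_eq_nil_iff.1 h).1
    have hrot1 : l' ++ l = (l ++ l').rotate l.length := (rotate_app l l').symm
    have hrot2 : l ++ l' = (l' ++ l).rotate l'.length := (rotate_app l' l).symm
    by_cases hPX : ∃ C ∈ S, l ++ l' = cyclePow C (μ C)
    · obtain ⟨C, hC, hXeq⟩ := hPX
      obtain ⟨C', hC', heq'⟩ := hpowrot C hC l.length
      have hYeq : l' ++ l = cyclePow C' (μ C') := by rw [hrot1, hXeq, heq']
      have hcX : Composable s t (l ++ l') := by rw [hXeq]; exact hpowcomp C hC _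
      have hcY : Composable s t (l' ++ l) := by rw [hYeq]; exact hpowcomp C' hC' _
      rw [h1 _ hcX ⟨C, hC, hXeq⟩, h1 _ hcY ⟨C', hC', hYeq⟩]
    · by_cases hPY : ∃ C ∈ S, l' ++ l = cyclePow C (μ C)
      · obtain ⟨C, hC, hYeq⟩ := hPY
        obtain ⟨C', hC', heq'⟩ := hpowrot C hC l'.length
        exact absurd ⟨C', hC', by rw [hrot2, hYeq, heq']⟩ hPX
      · by_cases hcX : Composable s t (l ++ l')
        · rw [h0 _ hcX hne1 hPX]
          by_cases hcY : Composable s t (l' ++ l)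
          · rw [h0 _ hcY hne2 hPY]
          · rw [pathElem_of_not_composable hcY, map_zero]
        · rw [pathElem_of_not_composable hcX, map_zero]
          by_cases hcY : Composable s t (l' ++ l)
          · rw [h0 _ hcY hne2 hPY]
          · rw [pathElem_of_not_composable hcY, map_zero]
  -- the trace identity on the spanning set
  have key : ∀ x ∈ B, ∀ y ∈ B, f (x * y) = f (y * x) := by
    rintro x (⟨v, rfl⟩ | ⟨l, hl, hcl, rfl⟩) y (⟨w, rfl⟩ | ⟨l', hl', hcl', rfl⟩)
    · rw [vtx_mul_vtx, vtx_mul_vtx]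
      by_cases h : v = w
      · subst h; rfl
      · rw [if_neg h, if_neg (Ne.symm h)]
    · exact hvp v l' hl' hcl'
    · exact (hvp w l hl hcl).symm
    · exact hpp l l' hl hl'
  -- the spanning set spans
  have hone_mem : (1 : PathAlg K V A s t) ∈ Submodule.span K B := by
    rw [one_eq_sum_vtx]
    exact Submodule.sum_mem _ fun v _ => Submodule.subset_span (Or.inl ⟨v, rfl⟩)
  have hmulB : ∀ x ∈ B, ∀ y ∈ B, x * y ∈ Submodule.span K B := by
    rintro x (⟨v, rfl⟩ | ⟨l, hl, hcl, rfl⟩) y (⟨w, rfl⟩ | ⟨l', hl', hcl', rfl⟩)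
    · rw [vtx_mul_vtx]
      split
      · exact Submodule.subset_span (Or.inl ⟨v, rfl⟩)
      · exact Submodule.zero_mem _
    · obtain ⟨a, ha⟩ := hhead l' hl'
      rw [vtx_mul_pathElem ha]
      split
      · exact Submodule.subset_span (Or.inr ⟨l', hl', hcl', rfl⟩)
      · exact Submodule.zero_mem _
    · obtain ⟨b, hb⟩ := hlast l hl
      rw [pathElem_mul_vtx hb]
      split
      · exact Submodule.subset_span (Or.inr ⟨l, hl, hcl, rfl⟩)
      · exact Submodule.zero_mem _
    · rw [← pathElem_append]
      by_cases hc : Composable s t (l ++ l')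
      · exact Submodule.subset_span
          (Or.inr ⟨l ++ l', fun h => hl (List.append_eq_nil_iff.1 h).1, hc, rfl⟩)
      · rw [pathElem_of_not_composable hc]
        exact Submodule.zero_mem _
  have hmul_span : ∀ x ∈ Submodule.span K B, ∀ y ∈ Submodule.span K B,
      x * y ∈ Submodule.span K B := by
    intro x hx
    induction hx using Submodule.span_induction with
    | mem x hxB =>
      intro y hy
      induction hy using Submodule.span_induction with
      | mem y hyB => exact hmulB x hxB y hyB
      | zero => rw [mul_zero]; exact Submodule.zero_mem _
      | add y z _ _ hy hz => rw [mul_add]; exact Submodule.add_mem _ hy hz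
      | smul c y _ hy => rw [mul_smul_comm]; exact Submodule.smul_mem _ _ hy
    | zero => intro y hy; rw [zero_mul]; exact Submodule.zero_mem _
    | add x z _ _ hx hz => intro y hy; rw [add_mul]; exact Submodule.add_mem _ (hx y hy) (hz y hy)
    | smul c x _ hx => intro y hy; rw [smul_mul_assoc]; exact Submodule.smul_mem _ _ (hx y hy)
  have htop : ∀ x : PathAlg K V A s t, x ∈ Submodule.span K B := by
    intro x
    obtain ⟨y, rfl⟩ := RingQuot.mkAlgHom_surjective K (PathRel K V A s t) x
    induction y using FreeAlgebra.induction with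
    | grade0 r =>
      have hr : (RingQuot.mkAlgHom K (PathRel K V A s t)) (algebraMap K _ r)
          = r • (1 : PathAlg K V A s t) := by
        rw [AlgHom.commutes, Algebra.algebraMap_eq_smul_one]
      rw [hr]
      exact Submodule.smul_mem _ _ hone_mem
    | grade1 z =>
      cases z with
      | inl v => exact Submodule.subset_span (Or.inl ⟨v, rfl⟩)
      | inr a =>
        refine Submodule.subset_span
          (Or.inr ⟨[a], by simp, List.isChain_singleton a, ?_⟩)
        exact (pathElem_singleton a).symm
    | mul a b iha ihb => rw [map_mul]; exact hmul_span _ iha _ ihb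
    | add a b iha ihb => rw [map_add]; exact Submodule.add_mem _ iha ihb
  -- conclude by bilinearity
  intro x y
  have hx := htop x
  have hy := htop y
  induction hx using Submodule.span_induction with
  | mem x hxB =>
    induction hy using Submodule.span_induction with
    | mem y hyB => exact key x hxB y hyB
    | zero => rw [mul_zero, zero_mul]
    | add y z _ _ hy hz =>
      rw [mul_add, add_mul, map_add, map_add, hy, hz]
    | smul c y _ hy =>
      rw [mul_smul_comm, smul_mul_assoc, map_smul, map_smul, hy]
  | zero => rw [mul_zero, zero_mul]
  | add x z _ _ hx hz =>
    rw [mul_add, add_mul, map_add, map_add, hx, hz]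
  | smul c x _ hx =>
    rw [mul_smul_comm, smul_mul_assoc, map_smul, map_smul, hx]
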